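/- arXiv:2007.00844 — 2 statements merged into one kernel-verified Lean document; each statement's English description precedes it below -/
import Mathlib

section
/- Let M_1, ..., M_n be closed affine subspaces of a real Hilbert space H with M := ∩_{i=1}^n M_i nonempty. Let Q := P_{M_n} ⋯ P_{M_1}, Q_i := P_{M_i} ⋯ P_{M_1} for i ∈ {1,...,n}, and Q_0 := I. Then for every x ∈ H and every x_0 ∈ H, ⟨x − Q(x), P_M(x_0)⟩ = (1/2)‖x‖² − (1/2)‖Q(x)‖² − (1/2) Σ_{i=1}^n ‖Q_{i−1}(x) − Q_i(x)‖². -/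
open RealInnerProductSpace

/-- `P` is the nearest-point projector onto the set `S`. -/
def IsProjOn {H : Type*} [NormedAddCommGroup H] [InnerProductSpace ℝ H]
    (S : Set H) (P : H → H) : Prop :=
  ∀ x, P x ∈ S ∧ ∀ y ∈ S, ‖x - P x‖ ≤ ‖x - y‖

lemma isProjOn_orth {H : Type*} [NormedAddCommGroup H] [InnerProductSpace ℝ H]
    (S : AffineSubspace ℝ H) (P : H → H) (hP : IsProjOn (S : Set H) P)
    (u m : H) (hm : m ∈ S) : ⟪u - P u, m - P u⟫ = 0 := by
  obtain ⟨hPu, hmin⟩ := hP u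
  set d := u - P u with hd
  set w := m - P u with hw
  set c := ⟪d, w⟫ with hc
  have key : ∀ t : ℝ, ‖d‖ ^ 2 ≤ ‖d‖ ^ 2 - 2 * t * c + t ^ 2 * ‖w‖ ^ 2 := by
    intro t
    have hmem : t • w + P u ∈ S := by
      have := S.smul_vsub_vadd_mem t hm hPu hPu
      simpa [hw] using this
    have h1 := hmin _ hmem
    have h2 : u - (t • w + P u) = d - t • w := by rw [hd]; abel
    rw [h2] at h1
    have h3 : ‖d‖ ^ 2 ≤ ‖d - t • w‖ ^ 2 := by
      have := norm_nonneg d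
      nlinarith [h1]
    have h4 : ‖d - t • w‖ ^ 2 = ‖d‖ ^ 2 - 2 * t * c + t ^ 2 * ‖w‖ ^ 2 := by
      rw [norm_sub_sq_real, norm_smul, real_inner_smul_right]
      simp [mul_pow]
      ring
    linarith [h4 ▸ h3]
  by_cases hw0 : ‖w‖ ^ 2 = 0
  · have : w = 0 := by
      have := sq_eq_zero_iff.mp hw0
      simpa using this
    simp [hc, this]
  · have hwpos : 0 < ‖w‖ ^ 2 := lt_of_le_of_ne (by positivity) (Ne.symm hw0)
    have h := key (c / ‖w‖ ^ 2)
    have e : ‖d‖ ^ 2 - 2 * (c / ‖w‖ ^ 2) * c + (c / ‖w‖ ^ 2) ^ 2 * ‖w‖ ^ 2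
        = ‖d‖ ^ 2 - c ^ 2 / ‖w‖ ^ 2 := by
      field_simp
      ring
    rw [e] at h
    have h5 : c ^ 2 / ‖w‖ ^ 2 ≤ 0 := by linarith
    have hc2 : c ^ 2 ≤ 0 := by
      by_contra hpos
      push_neg at hpos
      exact absurd (div_pos hpos hwpos) (not_lt.mpr h5)
    have : c = 0 := by nlinarith [sq_nonneg c]
    exact this

/-- For closed affine subspaces `M₁, …, Mₙ` with `M = ∩ᵢ Mᵢ ≠ ∅`,
`Q = P_{Mₙ} ⋯ P_{M₁}` and partial compositions `Qᵢ = P_{Mᵢ} ⋯ P_{M₁}` (`Q₀ = I`),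
one has `⟨x − Q x, P_M x₀⟩ = ½‖x‖² − ½‖Q x‖² − ½ Σᵢ ‖Q_{i−1} x − Qᵢ x‖²`. -/
theorem cyclic_projections_inner_formula
    {H : Type*} [NormedAddCommGroup H] [InnerProductSpace ℝ H] [CompleteSpace H]
    (n : ℕ) (hn : 1 ≤ n)
    (M : ℕ → AffineSubspace ℝ H)
    (hclosed : ∀ i ∈ Finset.Icc 1 n, IsClosed (M i : Set H))
    (hne : (⋂ i ∈ Finset.Icc 1 n, (M i : Set H)).Nonempty)
    (P : ℕ → H → H)
    (hP : ∀ i ∈ Finset.Icc 1 n, IsProjOn (M i : Set H) (P i))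
    (PM : H → H)
    (hPM : IsProjOn (⋂ i ∈ Finset.Icc 1 n, (M i : Set H)) PM)
    (Q : ℕ → H → H)
    (hQ0 : Q 0 = id)
    (hQ : ∀ i, 1 ≤ i → i ≤ n → Q i = P i ∘ Q (i - 1))
    (x0 : H) (x : H) :
    ⟪x - Q n x, PM x0⟫
      = (1 / 2) * ‖x‖ ^ 2 - (1 / 2) * ‖Q n x‖ ^ 2
        - (1 / 2) * ∑ i ∈ Finset.Icc 1 n, ‖Q (i - 1) x - Q i x‖ ^ 2 := by
  set m := PM x0 with hm
  have hmM : ∀ i ∈ Finset.Icc 1 n, m ∈ M i := by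
    intro i hi
    have h := (hPM x0).1
    simp only [Set.mem_iInter] at h
    exact h i hi
  -- per-step identity
  have step : ∀ i ∈ Finset.Icc 1 n,
      ⟪Q (i - 1) x - Q i x, m⟫
        = (1 / 2) * ‖Q (i - 1) x‖ ^ 2 - (1 / 2) * ‖Q i x‖ ^ 2
          - (1 / 2) * ‖Q (i - 1) x - Q i x‖ ^ 2 := by
    intro i hi
    have hQi : Q i x = P i (Q (i - 1) x) := by
      rw [Finset.mem_Icc] at hi
      rw [hQ i hi.1 hi.2]; rfl
    have horth : ⟪Q (i - 1) x - Q i x, m - Q i x⟫ = 0 := by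
      rw [hQi]
      exact isProjOn_orth (M i) (P i) (hP i hi) (Q (i - 1) x) m (hmM i hi)
    set u := Q (i - 1) x
    set v := Q i x
    have h1 : ⟪u - v, m⟫ = ⟪u - v, v⟫ := by
      rw [inner_sub_right] at horth; linarith
    have h2 : ⟪u - v, v⟫ = ⟪u, v⟫ - ⟪v, v⟫ := inner_sub_left u v v
    have h3 : ‖u - v‖ ^ 2 = ‖u‖ ^ 2 - 2 * ⟪u, v⟫ + ‖v‖ ^ 2 := norm_sub_sq_real u v
    have h4 : ⟪v, v⟫ = ‖v‖ ^ 2 := real_inner_self_eq_norm_sq v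
    rw [h1, h2, h4]; linarith
  have hIcc : Finset.Icc 1 n = Finset.Ico 1 (n + 1) := by rw [Finset.Ico_add_one_right_eq_Icc]
  -- telescoping decomposition
  have hdecomp : x - Q n x = ∑ i ∈ Finset.Icc 1 n, (Q (i - 1) x - Q i x) := by
    rw [hIcc, Finset.sum_Ico_eq_sum_range]
    simp only [Nat.add_sub_cancel]
    have : ∀ i, Q (1 + i - 1) x - Q (1 + i) x = Q i x - Q (i + 1) x := by
      intro i
      have e1 : 1 + i - 1 = i := by omega
      have e2 : 1 + i = i + 1 := by omega
      rw [e1, e2]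
    rw [Finset.sum_congr rfl fun i _ => this i, Finset.sum_range_sub' (fun i => Q i x)]
    simp [hQ0]
  calc ⟪x - Q n x, m⟫ = ∑ i ∈ Finset.Icc 1 n, ⟪Q (i - 1) x - Q i x, m⟫ := by
        rw [hdecomp, sum_inner]
    _ = ∑ i ∈ Finset.Icc 1 n,
          ((1 / 2) * ‖Q (i - 1) x‖ ^ 2 - (1 / 2) * ‖Q i x‖ ^ 2
            - (1 / 2) * ‖Q (i - 1) x - Q i x‖ ^ 2) := Finset.sum_congr rfl step
    _ = (∑ i ∈ Finset.Icc 1 n, ((1 / 2) * ‖Q (i - 1) x‖ ^ 2 - (1 / 2) * ‖Q i x‖ ^ 2))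
          - (1 / 2) * ∑ i ∈ Finset.Icc 1 n, ‖Q (i - 1) x - Q i x‖ ^ 2 := by
        rw [Finset.sum_sub_distrib, Finset.mul_sum]
    _ = (1 / 2) * ‖x‖ ^ 2 - (1 / 2) * ‖Q n x‖ ^ 2
          - (1 / 2) * ∑ i ∈ Finset.Icc 1 n, ‖Q (i - 1) x - Q i x‖ ^ 2 := by
        congr 1
        rw [hIcc, Finset.sum_Ico_eq_sum_range]
        simp only [Nat.add_sub_cancel]
        have : ∀ i, (1 / 2 : ℝ) * ‖Q (1 + i - 1) x‖ ^ 2 - (1 / 2) * ‖Q (1 + i) x‖ ^ 2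
            = (fun j => (1 / 2 : ℝ) * ‖Q j x‖ ^ 2) i - (fun j => (1 / 2 : ℝ) * ‖Q j x‖ ^ 2) (i + 1) := by
          intro i
          have e1 : 1 + i - 1 = i := by omega
          have e2 : 1 + i = i + 1 := by omega
          rw [e1, e2]
        rw [Finset.sum_congr rfl fun i _ => this i,
          Finset.sum_range_sub' (fun j => (1 / 2 : ℝ) * ‖Q j x‖ ^ 2)]
        simp [hQ0]
end

section
/- Let M_1, M_2 be closed affine subspaces of a real Hilbert space H with M_1 ∩ M_2 nonempty, with parallel linear subspaces M_1', M_2'. Let T := T_{M_2,M_1} T_{M_1,M_2}, where T_{C_1,C_2} := (1/2)(I + R_{C_2} R_{C_1}). Then Fix T = Fix T_{M_1,M_2} ∩ Fix T_{M_2,M_1} = M_1 ∩ M_2 + (M_1 − M_2)^⊥ = M_1 ∩ M_2 + (M_1')^⊥ ∩ (M_2')^⊥. -/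
open Pointwise RealInnerProductSpace

/-- The orthogonal complement of a subset of `H`. -/
def setOrth {H : Type*} [NormedAddCommGroup H] [InnerProductSpace ℝ H]
    (S : Set H) : Set H :=
  {x | ∀ y ∈ S, ⟪x, y⟫ = 0}

section aux
variable {H : Type*} [NormedAddCommGroup H] [InnerProductSpace ℝ H]

lemma projOrth {M : AffineSubspace ℝ H} {P : H → H}
    (hP : IsProjOn (M : Set H) P) (x : H) :
    ∀ u ∈ M.direction, ⟪x - P x, u⟫ = 0 := by
  intro u hu
  by_cases hu0 : u = 0
  · simp [hu0]
  have hmem : ∀ t : ℝ, P x + t • u ∈ (M : Set H) := by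
    intro t
    have h1 : t • u ∈ M.direction := M.direction.smul_mem t hu
    have h2 := AffineSubspace.vadd_mem_of_mem_direction h1 (hP x).1
    rwa [vadd_eq_add, add_comm] at h2
  have key : ∀ t : ℝ, ‖x - P x‖ ≤ ‖x - P x - t • u‖ := by
    intro t
    have h1 := (hP x).2 (P x + t • u) (hmem t)
    have he : x - (P x + t • u) = x - P x - t • u := by abel
    rwa [he] at h1
  set v := x - P x with hv
  set s := ⟪u, u⟫ with hs
  have hspos : (0:ℝ) < s := not_le.mp (fun h => hu0 (real_inner_self_nonpos.mp h))
  set p := ⟪v, u⟫ with hp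
  have hexp : ∀ t : ℝ, ‖v - t • u‖^2 = ‖v‖^2 - 2*t*p + t^2*s := by
    intro t
    rw [← real_inner_self_eq_norm_sq, real_inner_sub_sub_self,
      real_inner_smul_right, real_inner_smul_left, real_inner_smul_right,
      real_inner_self_eq_norm_sq]
    ring
  have hineq : ∀ t : ℝ, 0 ≤ -2*t*p + t^2*s := by
    intro t
    have h2 : ‖v‖^2 ≤ ‖v - t • u‖^2 := by
      have := key t
      nlinarith [norm_nonneg v, norm_nonneg (v - t • u)]
    rw [hexp t] at h2; linarith
  have h5 := hineq (p / s)
  have h3 : (0:ℝ) ≤ (-2*(p/s)*p + (p/s)^2*s) * s := mul_nonneg h5 hspos.le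
  have h4 : (-2*(p/s)*p + (p/s)^2*s) * s = -p^2 := by
    field_simp
    ring
  have h6 : p^2 ≤ 0 := by linarith [h3, h4.symm ▸ h3]
  have h7 : p = 0 := by nlinarith [sq_nonneg p]
  exact h7

lemma projEq {M : AffineSubspace ℝ H} {P : H → H}
    (hP : IsProjOn (M : Set H) P) {x q : H} (hq : q ∈ M)
    (horth : ∀ u ∈ M.direction, ⟪x - q, u⟫ = 0) : P x = q := by
  have hPm : P x ∈ M := (hP x).1
  have hd : P x - q ∈ M.direction := by
    have := AffineSubspace.vsub_mem_direction hPm hq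
    rwa [vsub_eq_sub] at this
  have h1 : ⟪x - q, P x - q⟫ = 0 := horth _ hd
  have h2 : ⟪x - P x, P x - q⟫ = 0 := projOrth hP x _ hd
  have h3 : ⟪P x - q, P x - q⟫ = 0 := by
    have he : (P x - q) = (x - q) - (x - P x) := by abel
    nth_rewrite 1 [he]
    rw [inner_sub_left, h1, h2]; ring
  exact sub_eq_zero.mp (inner_self_eq_zero.mp h3)

lemma reflIso {M : AffineSubspace ℝ H} {P R : H → H}
    (hP : IsProjOn (M : Set H) P)
    (hR : ∀ x, R x = (2:ℝ) • P x - x) (a b : H) :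
    ‖R a - R b‖ = ‖a - b‖ := by
  have hab : a - b = (P a - P b) + ((a - P a) - (b - P b)) := by abel
  have hr : R a - R b = (P a - P b) - ((a - P a) - (b - P b)) := by
    rw [hR a, hR b]; module
  have hpq : ⟪P a - P b, (a - P a) - (b - P b)⟫ = 0 := by
    have hpU : P a - P b ∈ M.direction := by
      have := AffineSubspace.vsub_mem_direction (hP a).1 (hP b).1
      rwa [vsub_eq_sub] at this
    have h1 := projOrth hP a _ hpU
    have h2 := projOrth hP b _ hpU
    rw [real_inner_comm, inner_sub_left, h1, h2]; ring
  have h2 : ‖R a - R b‖^2 = ‖a - b‖^2 := by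
    rw [hr, hab, ← real_inner_self_eq_norm_sq, ← real_inner_self_eq_norm_sq,
      real_inner_sub_sub_self, real_inner_add_add_self, hpq]
    ring
  rw [← Real.sqrt_sq (norm_nonneg (R a - R b)), ← Real.sqrt_sq (norm_nonneg (a - b)), h2]

end aux

/-- Fixed point set of the symmetrised Douglas–Rachford operator
`T = T_{M₂,M₁} T_{M₁,M₂}` for closed affine subspaces with nonempty intersection:
`Fix T = Fix T_{M₁,M₂} ∩ Fix T_{M₂,M₁} = M₁ ∩ M₂ + (M₁ − M₂)^⊥
      = M₁ ∩ M₂ + (M₁')^⊥ ∩ (M₂')^⊥`. -/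
theorem symmetric_dr_fixed_points
    {H : Type*} [NormedAddCommGroup H] [InnerProductSpace ℝ H] [CompleteSpace H]
    (M1 M2 : AffineSubspace ℝ H)
    (hM1 : IsClosed (M1 : Set H)) (hM2 : IsClosed (M2 : Set H))
    (hne : ((M1 : Set H) ∩ (M2 : Set H)).Nonempty)
    (P1 P2 : H → H)
    (hP1 : IsProjOn (M1 : Set H) P1) (hP2 : IsProjOn (M2 : Set H) P2)
    (R1 R2 : H → H)
    (hR1 : ∀ x, R1 x = (2 : ℝ) • P1 x - x) (hR2 : ∀ x, R2 x = (2 : ℝ) • P2 x - x)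
    (T12 T21 : H → H)
    (hT12 : ∀ x, T12 x = ((1 : ℝ) / 2) • (x + R2 (R1 x)))
    (hT21 : ∀ x, T21 x = ((1 : ℝ) / 2) • (x + R1 (R2 x))) :
    {y : H | T21 (T12 y) = y} = {y : H | T12 y = y} ∩ {y : H | T21 y = y} ∧
    {y : H | T21 (T12 y) = y}
      = ((M1 : Set H) ∩ (M2 : Set H)) + setOrth ((M1 : Set H) - (M2 : Set H)) ∧
    {y : H | T21 (T12 y) = y}
      = ((M1 : Set H) ∩ (M2 : Set H))
        + ((M1.directionᗮ : Set H) ∩ (M2.directionᗮ : Set H)) := by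
  obtain ⟨c, hc1, hc2⟩ := hne
  have hc1' : c ∈ M1 := hc1
  have hc2' : c ∈ M2 := hc2
  set K : Set H := {w : H | (∀ u ∈ M1.direction, ⟪w, u⟫ = 0) ∧
      ∀ v ∈ M2.direction, ⟪w, v⟫ = 0} with hK
  set S : Set H := ((M1 : Set H) ∩ (M2 : Set H)) + K with hS
  have dirMem1 : ∀ {a : H}, a ∈ M1 → a - c ∈ M1.direction := by
    intro a ha
    have := AffineSubspace.vsub_mem_direction ha hc1'
    rwa [vsub_eq_sub] at this
  have dirMem2 : ∀ {a : H}, a ∈ M2 → a - c ∈ M2.direction := by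
    intro a ha
    have := AffineSubspace.vsub_mem_direction ha hc2'
    rwa [vsub_eq_sub] at this
  have memOf1 : ∀ {w : H}, w ∈ M1.direction → c + w ∈ M1 := by
    intro w hw
    have := AffineSubspace.vadd_mem_of_mem_direction hw hc1'
    rwa [vadd_eq_add, add_comm] at this
  have memOf2 : ∀ {w : H}, w ∈ M2.direction → c + w ∈ M2 := by
    intro w hw
    have := AffineSubspace.vadd_mem_of_mem_direction hw hc2'
    rwa [vadd_eq_add, add_comm] at this
  -- fixed point criteria
  have hfix12 : ∀ x, T12 x = x ↔ P2 (R1 x) = P1 x := by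
    intro x
    rw [hT12 x, hR2, hR1]
    constructor
    · intro h
      have h2 : P2 ((2:ℝ) • P1 x - x) - P1 x =
          ((1:ℝ)/2) • (x + ((2:ℝ) • P2 ((2:ℝ) • P1 x - x) - ((2:ℝ) • P1 x - x))) - x := by
        module
      rw [h, sub_self] at h2
      exact sub_eq_zero.mp h2
    · intro h
      rw [h]; module
  have hfix21 : ∀ x, T21 x = x ↔ P1 (R2 x) = P2 x := by
    intro x
    rw [hT21 x, hR1, hR2]
    constructor
    · intro h
      have h2 : P1 ((2:ℝ) • P2 x - x) - P2 x =
          ((1:ℝ)/2) • (x + ((2:ℝ) • P1 ((2:ℝ) • P2 x - x) - ((2:ℝ) • P2 x - x))) - x := by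
        module
      rw [h, sub_self] at h2
      exact sub_eq_zero.mp h2
    · intro h
      rw [h]; module
  -- characterization of the fixed point sets
  have hchar : ∀ x, (P2 (R1 x) = P1 x) ↔ x ∈ S := by
    intro x
    constructor
    · intro h
      have hm1 : P1 x ∈ M1 := (hP1 x).1
      have hm2 : P1 x ∈ M2 := h ▸ (hP2 (R1 x)).1
      have ho1 : ∀ u ∈ M1.direction, ⟪x - P1 x, u⟫ = 0 := projOrth hP1 x
      have ho2 : ∀ v ∈ M2.direction, ⟪x - P1 x, v⟫ = 0 := by
        intro v hv
        have h0 := projOrth hP2 (R1 x) v hv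
        rw [h] at h0
        have hrr : R1 x - P1 x = -(x - P1 x) := by rw [hR1 x]; module
        rw [hrr, inner_neg_left] at h0
        linarith
      exact Set.mem_add.mpr ⟨P1 x, ⟨hm1, hm2⟩, x - P1 x, ⟨ho1, ho2⟩, by abel⟩
    · intro hx
      obtain ⟨m, hm, w, hw, rfl⟩ := Set.mem_add.mp hx
      obtain ⟨hm1, hm2⟩ := hm
      obtain ⟨hw1, hw2⟩ := hw
      have hP1x : P1 (m + w) = m := by
        refine projEq hP1 hm1 ?_
        intro u hu
        have he : m + w - m = w := by abel
        rw [he]; exact hw1 u hu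
      have hR1x : R1 (m + w) = m - w := by rw [hR1, hP1x]; module
      have hP2r : P2 (m - w) = m := by
        refine projEq hP2 hm2 ?_
        intro v hv
        have he : m - w - m = -w := by abel
        rw [he, inner_neg_left, hw2 v hv, neg_zero]
      rw [hR1x, hP2r, hP1x]
  have hchar21 : ∀ x, (P1 (R2 x) = P2 x) ↔ x ∈ S := by
    intro x
    constructor
    · intro h
      have hm2 : P2 x ∈ M2 := (hP2 x).1
      have hm1 : P2 x ∈ M1 := h ▸ (hP1 (R2 x)).1
      have ho2 : ∀ v ∈ M2.direction, ⟪x - P2 x, v⟫ = 0 := projOrth hP2 x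
      have ho1 : ∀ u ∈ M1.direction, ⟪x - P2 x, u⟫ = 0 := by
        intro u hu
        have h0 := projOrth hP1 (R2 x) u hu
        rw [h] at h0
        have hrr : R2 x - P2 x = -(x - P2 x) := by rw [hR2 x]; module
        rw [hrr, inner_neg_left] at h0
        linarith
      exact Set.mem_add.mpr ⟨P2 x, ⟨hm1, hm2⟩, x - P2 x, ⟨ho1, ho2⟩, by abel⟩
    · intro hx
      obtain ⟨m, hm, w, hw, rfl⟩ := Set.mem_add.mp hx
      obtain ⟨hm1, hm2⟩ := hm
      obtain ⟨hw1, hw2⟩ := hw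
      have hP2x : P2 (m + w) = m := by
        refine projEq hP2 hm2 ?_
        intro v hv
        have he : m + w - m = w := by abel
        rw [he]; exact hw2 v hv
      have hR2x : R2 (m + w) = m - w := by rw [hR2, hP2x]; module
      have hP1r : P1 (m - w) = m := by
        refine projEq hP1 hm1 ?_
        intro u hu
        have he : m - w - m = -w := by abel
        rw [he, inner_neg_left, hw1 u hu, neg_zero]
      rw [hR2x, hP1r, hP2x]
  -- common fixed point c
  have hP1c : P1 c = c := projEq hP1 hc1' (by intro u hu; simp)
  have hP2c : P2 c = c := projEq hP2 hc2' (by intro u hu; simp)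
  have hR1c : R1 c = c := by rw [hR1, hP1c]; module
  have hR2c : R2 c = c := by rw [hR2, hP2c]; module
  have iso1 : ∀ a b, ‖R1 a - R1 b‖ = ‖a - b‖ := reflIso hP1 hR1
  have iso2 : ∀ a b, ‖R2 a - R2 b‖ = ‖a - b‖ := reflIso hP2 hR2
  have expand : ∀ u v : H, ‖((1:ℝ)/2) • (u + v)‖^2 = (‖u‖^2 + 2*⟪u,v⟫ + ‖v‖^2)/4 := by
    intro u v
    have h1 : ‖u + v‖^2 = ‖u‖^2 + 2*⟪u,v⟫ + ‖v‖^2 := by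
      rw [← real_inner_self_eq_norm_sq, real_inner_add_add_self,
        real_inner_self_eq_norm_sq, real_inner_self_eq_norm_sq]
    rw [norm_smul, mul_pow, h1]
    norm_num [Real.norm_eq_abs]
    ring
  -- key: fixed points of the composition are common fixed points
  have hkey : ∀ x, T21 (T12 x) = x → T12 x = x := by
    intro x hx
    have hba : ‖R2 (R1 x) - c‖ = ‖x - c‖ := by
      conv_lhs => rw [show (c:H) = R2 (R1 c) by rw [hR1c, hR2c]]
      rw [iso2, iso1]
    have ht12 : T12 x - c = ((1:ℝ)/2) • ((x - c) + (R2 (R1 x) - c)) := by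
      rw [hT12]; module
    have hba' : ‖R1 (R2 (T12 x)) - c‖ = ‖T12 x - c‖ := by
      conv_lhs => rw [show (c:H) = R1 (R2 c) by rw [hR2c, hR1c]]
      rw [iso1, iso2]
    have hx' : x - c = ((1:ℝ)/2) • ((T12 x - c) + (R1 (R2 (T12 x)) - c)) := by
      conv_lhs => rw [← hx]
      rw [hT21 (T12 x)]; module
    have e1 : ‖x - c‖^2 = (‖T12 x - c‖^2 + 2*⟪T12 x - c, R1 (R2 (T12 x)) - c⟫
        + ‖R1 (R2 (T12 x)) - c‖^2)/4 := by
      rw [hx', expand]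
    have e2 : ‖T12 x - c‖^2 = (‖x - c‖^2 + 2*⟪x - c, R2 (R1 x) - c⟫
        + ‖R2 (R1 x) - c‖^2)/4 := by
      rw [ht12, expand]
    have hsab : ⟪x - c, R2 (R1 x) - c⟫ ≤ ‖x - c‖ * ‖R2 (R1 x) - c‖ :=
      real_inner_le_norm _ _
    have hsab' : ⟪T12 x - c, R1 (R2 (T12 x)) - c⟫
        ≤ ‖T12 x - c‖ * ‖R1 (R2 (T12 x)) - c‖ := real_inner_le_norm _ _
    rw [hba] at hsab e2
    rw [hba'] at hsab' e1
    have h0 : ‖(x - c) - (R2 (R1 x) - c)‖^2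
        = ‖x - c‖^2 - 2*⟪x - c, R2 (R1 x) - c⟫ + ‖R2 (R1 x) - c‖^2 := by
      rw [← real_inner_self_eq_norm_sq, real_inner_sub_sub_self,
        real_inner_self_eq_norm_sq, real_inner_self_eq_norm_sq]
    rw [hba] at h0
    have hle : ‖(x - c) - (R2 (R1 x) - c)‖^2 ≤ 0 := by nlinarith
    have h9 : ‖(x - c) - (R2 (R1 x) - c)‖^2 = 0 := le_antisymm hle (sq_nonneg _)
    have h10 : (x - c) - (R2 (R1 x) - c) = 0 := by
      have := pow_eq_zero_iff (n := 2) (by norm_num) |>.mp h9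
      exact norm_eq_zero.mp this
    have hRR : R2 (R1 x) = x := by
      have h11 : x - R2 (R1 x) = 0 := by rw [← h10]; abel
      have := sub_eq_zero.mp h11
      exact this.symm
    rw [hT12, hRR]
    module
  -- orth complement identifications
  have hKorth : setOrth ((M1 : Set H) - (M2 : Set H)) = K := by
    ext w
    simp only [setOrth, Set.mem_setOf_eq, hK]
    constructor
    · intro h
      constructor
      · intro u hu
        have hmem : (c + u) - c ∈ ((M1 : Set H) - (M2 : Set H)) :=
          Set.sub_mem_sub (memOf1 hu) hc2
        have h2 := h _ hmem
        have he : (c + u) - c = u := by abel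
        rwa [he] at h2
      · intro v hv
        have hmem : c - (c + v) ∈ ((M1 : Set H) - (M2 : Set H)) :=
          Set.sub_mem_sub hc1 (memOf2 hv)
        have h2 := h _ hmem
        have he : c - (c + v) = -v := by abel
        rw [he, inner_neg_right] at h2
        linarith
    · rintro ⟨h1, h2⟩ y hy
      obtain ⟨p, hp, q, hq, rfl⟩ := Set.mem_sub.mp hy
      have he : p - q = (p - c) - (q - c) := by abel
      rw [he, inner_sub_right, h1 _ (dirMem1 hp), h2 _ (dirMem2 hq), sub_zero]
  have hKorth2 : ((M1.directionᗮ : Set H) ∩ (M2.directionᗮ : Set H)) = K := by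
    ext w
    simp only [Set.mem_inter_iff, SetLike.mem_coe, Submodule.mem_orthogonal, hK,
      Set.mem_setOf_eq]
    constructor
    · rintro ⟨h1, h2⟩
      exact ⟨fun u hu => by rw [real_inner_comm]; exact h1 u hu,
        fun v hv => by rw [real_inner_comm]; exact h2 v hv⟩
    · rintro ⟨h1, h2⟩
      exact ⟨fun u hu => by rw [real_inner_comm]; exact h1 u hu,
        fun v hv => by rw [real_inner_comm]; exact h2 v hv⟩
  -- assemble
  have hS12 : {y : H | T12 y = y} = S := by
    ext y; simp only [Set.mem_setOf_eq]; rw [hfix12 y, hchar y]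
  have hS21 : {y : H | T21 y = y} = S := by
    ext y; simp only [Set.mem_setOf_eq]; rw [hfix21 y, hchar21 y]
  have hScomp : {y : H | T21 (T12 y) = y} = S := by
    ext y; simp only [Set.mem_setOf_eq]
    constructor
    · intro h
      exact (hchar y).mp ((hfix12 y).mp (hkey y h))
    · intro hy
      have h1 : T12 y = y := (hfix12 y).mpr ((hchar y).mpr hy)
      have h2 : T21 y = y := (hfix21 y).mpr ((hchar21 y).mpr hy)
      rw [h1, h2]
  refine ⟨?_, ?_, ?_⟩
  · rw [hScomp, hS12, hS21, Set.inter_self]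
  · rw [hScomp, hS, hKorth]
  · rw [hScomp, hS, hKorth2]
end
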